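/- An essential matrix E = [t]ₓ R with R ∈ SO(3), t ∈ ℝ³, satisfies the Demazure identity 2 E Eᵀ E − tr(E Eᵀ) E = 0. -/
import Mathlib


open Matrix Real

def skew (v : Fin 3 → ℝ) : Matrix (Fin 3) (Fin 3) ℝ :=
  !![0, -v 2, v 1; v 2, 0, -v 0; -v 1, v 0, 0]

def quatRot (σ : ℝ) (u : Fin 3 → ℝ) : Matrix (Fin 3) (Fin 3) ℝ :=
  (2 : ℝ) • (vecMulVec u u - σ • skew u) + (σ ^ 2 - u ⬝ᵥ u) • (1 : Matrix (Fin 3) (Fin 3) ℝ)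

noncomputable def rodrigues (θ : ℝ) (r : Fin 3 → ℝ) : Matrix (Fin 3) (Fin 3) ℝ :=
  Real.cos θ • (1 : Matrix (Fin 3) (Fin 3) ℝ) + Real.sin θ • skew r
    + (1 - Real.cos θ) • vecMulVec r r

set_option maxHeartbeats 1000000 in
lemma skew_demazure (t : Fin 3 → ℝ) :
    (2 : ℝ) • (skew t * (skew t)ᵀ * skew t) - (skew t * (skew t)ᵀ).trace • skew t = 0 := by
  have hT : (skew t)ᵀ = !![0, t 2, -t 1; -t 2, 0, t 0; t 1, -t 0, 0] := by
    ext i j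
    fin_cases i <;> fin_cases j <;> simp [skew]
  rw [hT, skew, Matrix.mul_fin_three, Matrix.mul_fin_three, Matrix.trace_fin_three_of]
  ext i j
  fin_cases i <;> fin_cases j <;> simp <;> ring

theorem essential_demazure (R : Matrix (Fin 3) (Fin 3) ℝ) (t : Fin 3 → ℝ)
    (hR : Rᵀ * R = 1) (hRdet : R.det = 1) :
    let E := skew t * R
    (2 : ℝ) • (E * Eᵀ * E) - (E * Eᵀ).trace • E = 0 := by
  intro E
  have hRRt : R * Rᵀ = 1 := mul_eq_one_comm.mp hR
  have hEE : E * Eᵀ = skew t * (skew t)ᵀ := by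
    simp only [E, Matrix.transpose_mul, Matrix.mul_assoc]
    rw [← Matrix.mul_assoc R, hRRt, Matrix.one_mul]
  have : (2 : ℝ) • (E * Eᵀ * E) - (E * Eᵀ).trace • E
      = ((2 : ℝ) • (skew t * (skew t)ᵀ * skew t)
        - (skew t * (skew t)ᵀ).trace • skew t) * R := by
    rw [hEE]
    simp only [E, Matrix.sub_mul, Matrix.smul_mul, Matrix.mul_assoc]
  rw [this, skew_demazure, Matrix.zero_mul]
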